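/- arXiv:2506.11592 — 2 statements merged into one kernel-verified Lean document; each statement's English description precedes it below -/
import Mathlib

section
/- Every regular closed subgraph G of a row-finite topological graph F is row-finite, i.e., s_G(G¹) = G⁰_reg. -/
open Set Topology

/-- A continuous map which is proper: preimages of compact sets are compact. -/
def ProperCont {X Y : Type*} [TopologicalSpace X] [TopologicalSpace Y] (f : X → Y) : Prop :=
  Continuous f ∧ ∀ K : Set Y, IsCompact K → IsCompact (f ⁻¹' K)

/-- The raw data of a (topological) graph: a source and a range map from edges to vertices. -/
structure GraphData (V E : Type*) where
  s : E → V
  r : E → V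

/-- `g` is a topological graph: source and range are continuous and the range map is a
local homeomorphism. -/
structure IsTopGraph {V E : Type*} [TopologicalSpace V] [TopologicalSpace E]
    (g : GraphData V E) : Prop where
  s_cont : Continuous g.s
  r_cont : Continuous g.r
  r_locHomeo : IsLocalHomeomorph g.r

namespace GraphData

variable {V E : Type*} [TopologicalSpace V] [TopologicalSpace E]

/-- `E⁰_fin`: vertices having a neighborhood whose preimage under the source map is compact. -/
def finSet (g : GraphData V E) : Set V := {v | ∃ U ∈ nhds v, IsCompact (g.s ⁻¹' U)}

/-- `E⁰_sink = E⁰ \ closure (s(E¹))`. -/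
def sinkSet (g : GraphData V E) : Set V := (closure (Set.range g.s))ᶜ

/-- `E⁰_reg = E⁰_fin \ closure (E⁰_sink)`. -/
def regSet (g : GraphData V E) : Set V := g.finSet \ closure g.sinkSet

/-- `E⁰_sing = E⁰ \ E⁰_reg`. -/
def singSet (g : GraphData V E) : Set V := (g.regSet)ᶜ

/-- A set of vertices is negatively invariant if every regular vertex in it emits an
edge whose range lies in it. -/
def NegInvariant (g : GraphData V E) (Y : Set V) : Prop :=
  ∀ v ∈ Y ∩ g.regSet, ∃ e, g.s e = v ∧ g.r e ∈ Y

/-- A topological graph is row-finite if `s(E¹) = E⁰_reg`. -/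
def RowFinite (g : GraphData V E) : Prop := Set.range g.s = g.regSet

/-- The restriction of a graph to a pair of subsets of vertices and edges. -/
def restrict (g : GraphData V E) (G0 : Set V) (G1 : Set E)
    (hs : Set.MapsTo g.s G1 G0) (hr : Set.MapsTo g.r G1 G0) : GraphData G0 G1 where
  s := fun e => ⟨g.s e, hs e.2⟩
  r := fun e => ⟨g.r e, hr e.2⟩

end GraphData

/-- `(G0, G1)` determines a closed subgraph of `g` (in particular it is itself
a topological graph with the restricted source and range maps). -/
structure IsClosedSubgraph {V E : Type*} [TopologicalSpace V] [TopologicalSpace E]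
    (g : GraphData V E) (G0 : Set V) (G1 : Set E) : Prop where
  s_maps : Set.MapsTo g.s G1 G0
  r_maps : Set.MapsTo g.r G1 G0
  closed0 : IsClosed G0
  closed1 : IsClosed G1
  isGraph : IsTopGraph (g.restrict G0 G1 s_maps r_maps)

/-- A regular closed subgraph: a closed subgraph whose vertex set is negatively invariant
and such that `r⁻¹(G⁰) ⊆ G¹`. -/
structure IsRegularClosedSubgraph {V E : Type*} [TopologicalSpace V] [TopologicalSpace E]
    (g : GraphData V E) (G0 : Set V) (G1 : Set E) extends IsClosedSubgraph g G0 G1 : Prop where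
  negInv : g.NegInvariant G0
  r_pre : g.r ⁻¹' G0 ⊆ G1

/-- A regular factor map `(m¹, m⁰) : gG → gF` between topological graphs: a pair of proper
continuous maps satisfying (F1), (F2) and (F3). -/
structure IsRegularFactorMap {V1 E1 V2 E2 : Type*}
    [TopologicalSpace V1] [TopologicalSpace E1] [TopologicalSpace V2] [TopologicalSpace E2]
    (gG : GraphData V1 E1) (gF : GraphData V2 E2) (m0 : V1 → V2) (m1 : E1 → E2) : Prop where
  proper0 : ProperCont m0
  proper1 : ProperCont m1
  F1r : ∀ e, gF.r (m1 e) = m0 (gG.r e)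
  F1s : ∀ e, gF.s (m1 e) = m0 (gG.s e)
  F2 : ∀ (x : E2) (v : V1), gF.r x = m0 v → ∃! e : E1, m1 e = x ∧ gG.r e = v
  F3 : m0 '' gG.singSet ⊆ gF.singSet


lemma GraphData.finSet_isOpen {V E : Type*} [TopologicalSpace V] [TopologicalSpace E]
    (g : GraphData V E) : IsOpen g.finSet := by
  rw [isOpen_iff_mem_nhds]
  rintro v ⟨U, hU, hK⟩
  rcases mem_nhds_iff.mp hU with ⟨t, htU, hto, hvt⟩
  exact Filter.mem_of_superset (hto.mem_nhds hvt)
    (fun w hw => ⟨U, mem_nhds_iff.mpr ⟨t, htU, hto, hw⟩, hK⟩)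

lemma GraphData.regSet_isOpen {V E : Type*} [TopologicalSpace V] [TopologicalSpace E]
    (g : GraphData V E) : IsOpen g.regSet :=
  g.finSet_isOpen.sdiff isClosed_closure

/-- Every regular closed subgraph `G` of a row-finite topological graph `F` is row-finite,
i.e. `s_G(G¹) = G⁰_reg`. -/
theorem regularClosedSubgraph_rowFinite
    {V E : Type*} [TopologicalSpace V] [TopologicalSpace E]
    [LocallyCompactSpace V] [T2Space V] [LocallyCompactSpace E] [T2Space E]
    (gF : GraphData V E) (hF : IsTopGraph gF) (hrow : gF.RowFinite)
    {G0 : Set V} {G1 : Set E} (hG : IsRegularClosedSubgraph gF G0 G1) :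
    (gF.restrict G0 G1 hG.s_maps hG.r_maps).RowFinite := by
  set gG := gF.restrict G0 G1 hG.s_maps hG.r_maps with hgGdef
  have hscont : Continuous gG.s := hG.isGraph.s_cont
  apply Set.Subset.antisymm
  · -- range s_G ⊆ regSet G
    rintro _ ⟨e, rfl⟩
    have hreg : gF.s (e : E) ∈ gF.regSet := by
      rw [← hrow]; exact ⟨(e : E), rfl⟩
    constructor
    · -- finSet
      obtain ⟨U, hU, hK⟩ := hreg.1
      refine ⟨Subtype.val ⁻¹' U,
        continuous_subtype_val.continuousAt.preimage_mem_nhds hU, ?_⟩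
      rw [Subtype.isCompact_iff]
      have himg : (Subtype.val '' (gG.s ⁻¹' (Subtype.val ⁻¹' U)) : Set E)
          = G1 ∩ gF.s ⁻¹' U := by
        have : gG.s ⁻¹' (Subtype.val ⁻¹' U)
            = (Subtype.val : G1 → E) ⁻¹' (gF.s ⁻¹' U) := rfl
        rw [this, Subtype.image_preimage_coe]
      rw [himg]
      exact hK.inter_left hG.closed1
    · -- not in closure of sinkSet
      have hsub : gG.sinkSet ⊆ (Subtype.val ⁻¹' gF.regSet)ᶜ := by
        intro x hx hxreg
        obtain ⟨f, hsf, hrf⟩ := hG.negInv (x : V) ⟨x.2, hxreg⟩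
        have hf1 : f ∈ G1 := hG.r_pre hrf
        exact hx (subset_closure ⟨⟨f, hf1⟩, Subtype.ext hsf⟩)
      have hcl : closure gG.sinkSet ⊆ (Subtype.val ⁻¹' gF.regSet)ᶜ :=
        closure_minimal hsub
          (isClosed_compl_iff.mpr (gF.regSet_isOpen.preimage continuous_subtype_val))
      intro hmem
      exact hcl hmem hreg
  · -- regSet G ⊆ range s_G
    rintro v ⟨⟨U, hU, hK⟩, hv2⟩
    have hv3 : v ∈ closure (Set.range gG.s) := by
      by_contra h; exact hv2 (subset_closure h)
    have hv4 : v ∈ closure (Set.range gG.s ∩ U) := by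
      rw [mem_closure_iff_nhds] at hv3 ⊢
      intro t ht
      obtain ⟨x, hx1, hx2⟩ := hv3 (t ∩ U) (Filter.inter_mem ht hU)
      exact ⟨x, hx1.1, hx2, hx1.2⟩
    have himg : gG.s '' (gG.s ⁻¹' U) = Set.range gG.s ∩ U := by
      rw [Set.image_preimage_eq_inter_range, Set.inter_comm]
    have hcpt : IsCompact (Set.range gG.s ∩ U) := himg ▸ hK.image hscont
    have := hcpt.isClosed.closure_subset hv4
    exact this.1
end

section
/- Let E ∪_m F be an adjunction topological graph. Then E is a closed subgraph of E ∪_m F, and the canonical maps p⁰ : F⁰ → (E ∪_m F)⁰ and p¹ : F¹ → (E ∪_m F)¹ are proper and satisfy condition (F1): r_∪(p¹(e)) = p⁰(r_F(e)) and s_∪(p¹(e)) = p⁰(s_F(e)) for all e ∈ F¹. -/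
open Set Topology

section Adjunction

/-- The relation generating the adjunction-space identification: `a ∈ A ⊆ Y` is glued
to `f a ∈ X`. -/
inductive AdjRel {X Y : Type*} {A : Set Y} (f : A → X) : X ⊕ Y → X ⊕ Y → Prop
  | glue (a : A) : AdjRel f (Sum.inl (f a)) (Sum.inr a.1)

/-- The adjunction space `X ∪_f Y`. -/
def AdjSpace {X Y : Type*} {A : Set Y} (f : A → X) : Type _ := Quot (AdjRel f)

instance {X Y : Type*} [TopologicalSpace X] [TopologicalSpace Y] {A : Set Y} (f : A → X) :
    TopologicalSpace (AdjSpace f) :=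
  inferInstanceAs (TopologicalSpace (Quot (AdjRel f)))

/-- The canonical (closed) embedding `X → X ∪_f Y`. -/
def adjInc {X Y : Type*} {A : Set Y} (f : A → X) : X → AdjSpace f :=
  fun x => Quot.mk _ (Sum.inl x)

/-- The canonical map `p : Y → X ∪_f Y`. -/
def adjP {X Y : Type*} {A : Set Y} (f : A → X) : Y → AdjSpace f :=
  fun y => Quot.mk _ (Sum.inr y)

variable {VE EE VF EF : Type*}

/-- The source map `s_∪` of the adjunction graph `E ∪_m F`. -/
def adjS (gE : GraphData VE EE) (gF : GraphData VF EF) {G0 : Set VF} {G1 : Set EF}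
    (m0 : G0 → VE) (m1 : G1 → EE) (hs : Set.MapsTo gF.s G1 G0)
    (hF1s : ∀ e : G1, gE.s (m1 e) = m0 ⟨gF.s e, hs e.2⟩) :
    AdjSpace m1 → AdjSpace m0 :=
  Quot.lift
    (fun x => match x with
      | Sum.inl e => adjInc m0 (gE.s e)
      | Sum.inr e => adjP m0 (gF.s e))
    (by
      rintro _ _ ⟨a⟩
      show adjInc m0 (gE.s (m1 a)) = adjP m0 (gF.s a.1)
      rw [hF1s a]
      exact Quot.sound (AdjRel.glue ⟨gF.s a.1, hs a.2⟩))

/-- The range map `r_∪` of the adjunction graph `E ∪_m F`. -/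
def adjR (gE : GraphData VE EE) (gF : GraphData VF EF) {G0 : Set VF} {G1 : Set EF}
    (m0 : G0 → VE) (m1 : G1 → EE) (hr : Set.MapsTo gF.r G1 G0)
    (hF1r : ∀ e : G1, gE.r (m1 e) = m0 ⟨gF.r e, hr e.2⟩) :
    AdjSpace m1 → AdjSpace m0 :=
  Quot.lift
    (fun x => match x with
      | Sum.inl e => adjInc m0 (gE.r e)
      | Sum.inr e => adjP m0 (gF.r e))
    (by
      rintro _ _ ⟨a⟩
      show adjInc m0 (gE.r (m1 a)) = adjP m0 (gF.r a.1)
      rw [hF1r a]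
      exact Quot.sound (AdjRel.glue ⟨gF.r a.1, hr a.2⟩))

/-- The adjunction graph `E ∪_m F`, obtained by attaching the topological graph `F` to the
topological graph `E` along a closed subgraph `(G0, G1)` of `F` via the pair `(m¹, m⁰)`. -/
def adjGraph (gE : GraphData VE EE) (gF : GraphData VF EF) {G0 : Set VF} {G1 : Set EF}
    (m0 : G0 → VE) (m1 : G1 → EE)
    (hs : Set.MapsTo gF.s G1 G0) (hr : Set.MapsTo gF.r G1 G0)
    (hF1s : ∀ e : G1, gE.s (m1 e) = m0 ⟨gF.s e, hs e.2⟩)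
    (hF1r : ∀ e : G1, gE.r (m1 e) = m0 ⟨gF.r e, hr e.2⟩) :
    GraphData (AdjSpace m0) (AdjSpace m1) where
  s := adjS gE gF m0 m1 hs hF1s
  r := adjR gE gF m0 m1 hr hF1r

end Adjunction


section AdjAux

open Classical in
/-- Normal form on the sum: points of `A` are replaced by their image under `f`. -/
noncomputable def adjNorm {X Y : Type*} {A : Set Y} (f : A → X) : X ⊕ Y → X ⊕ Y
  | Sum.inl x => Sum.inl x
  | Sum.inr y => if h : y ∈ A then Sum.inl (f ⟨y, h⟩) else Sum.inr y

variable {X Y : Type*} {A : Set Y} (f : A → X)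

lemma adjNorm_rel : ∀ a b, AdjRel f a b → adjNorm f a = adjNorm f b := by
  rintro _ _ ⟨a⟩
  simp [adjNorm, a.2]

/-- Decoding map on the adjunction space. -/
noncomputable def adjDecode : AdjSpace f → X ⊕ Y := Quot.lift (adjNorm f) (adjNorm_rel f)

lemma mk_adjNorm (c : X ⊕ Y) : Quot.mk (AdjRel f) (adjNorm f c) = Quot.mk _ c := by
  rcases c with x | y
  · rfl
  · by_cases h : y ∈ A
    · simpa [adjNorm, h] using Quot.sound (AdjRel.glue (f := f) ⟨y, h⟩)
    · simp [adjNorm, h]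

lemma adj_mk_eq_mk {c c' : X ⊕ Y} :
    Quot.mk (AdjRel f) c = Quot.mk (AdjRel f) c' ↔ adjNorm f c = adjNorm f c' := by
  constructor
  · intro h; exact congrArg (adjDecode f) h
  · intro h; rw [← mk_adjNorm f c, ← mk_adjNorm f c', h]

lemma adjInc_injective : Function.Injective (adjInc f) := by
  intro x x' h
  have := (adj_mk_eq_mk f).1 h
  simpa [adjNorm] using this

variable [TopologicalSpace X] [TopologicalSpace Y]

lemma isClosedMap_adjMk (hA : IsClosed A) (hf : IsProperMap f) :
    IsClosedMap (Quot.mk (AdjRel f)) := by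
  intro C hC
  rw [← isQuotientMap_quot_mk.isClosed_preimage]
  set D : Set X := (Sum.inl ⁻¹' C) ∪ f '' (Subtype.val ⁻¹' (Sum.inr ⁻¹' C)) with hDdef
  have hD : IsClosed D :=
    (hC.preimage continuous_inl).union
      (hf.isClosedMap _ ((hC.preimage continuous_inr).preimage continuous_subtype_val))
  have key1 : ∀ x : X, (Quot.mk (AdjRel f) (Sum.inl x) ∈ Quot.mk (AdjRel f) '' C) ↔ x ∈ D := by
    intro x
    constructor
    · rintro ⟨c, hc, hcx⟩
      rw [adj_mk_eq_mk] at hcx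
      rcases c with x' | y
      · simp only [adjNorm] at hcx
        cases hcx; exact Or.inl hc
      · by_cases h : y ∈ A
        · simp only [adjNorm, dif_pos h, Sum.inl.injEq] at hcx
          exact Or.inr ⟨⟨y, h⟩, hc, hcx⟩
        · simp [adjNorm, dif_neg h] at hcx
    · rintro (hx | ⟨a, ha, rfl⟩)
      · exact ⟨Sum.inl x, hx, rfl⟩
      · refine ⟨Sum.inr a.1, ha, (adj_mk_eq_mk f).2 ?_⟩
        simp [adjNorm, a.2]
  have key2 : ∀ y : Y, (Quot.mk (AdjRel f) (Sum.inr y) ∈ Quot.mk (AdjRel f) '' C) ↔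
      y ∈ (Sum.inr ⁻¹' C) ∪ Subtype.val '' (f ⁻¹' D) := by
    intro y
    by_cases h : y ∈ A
    · have hglue : Quot.mk (AdjRel f) (Sum.inr y) = Quot.mk (AdjRel f) (Sum.inl (f ⟨y, h⟩)) :=
        (Quot.sound (AdjRel.glue (f := f) ⟨y, h⟩)).symm
      rw [hglue, key1]
      constructor
      · intro hd; exact Or.inr ⟨⟨y, h⟩, hd, rfl⟩
      · rintro (hy | ⟨a, ha, ha1⟩)
        · exact Or.inr ⟨⟨y, h⟩, hy, rfl⟩
        · have : a = ⟨y, h⟩ := Subtype.ext ha1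
          rwa [this] at ha
    · constructor
      · rintro ⟨c, hc, hcx⟩
        rw [adj_mk_eq_mk] at hcx
        rcases c with x' | y'
        · simp [adjNorm, dif_neg h] at hcx
        · by_cases h' : y' ∈ A
          · simp [adjNorm, dif_pos h', dif_neg h] at hcx
          · simp only [adjNorm, dif_neg h', dif_neg h, Sum.inr.injEq] at hcx
            cases hcx; exact Or.inl hc
      · rintro (hy | ⟨a, _, ha1⟩)
        · exact ⟨Sum.inr y, hy, rfl⟩
        · exact absurd (ha1 ▸ a.2) h
  rw [isClosed_sum_iff]
  constructor
  · have e1 : Sum.inl ⁻¹' (Quot.mk (AdjRel f) ⁻¹' (Quot.mk (AdjRel f) '' C)) = D :=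
      Set.ext key1
    rw [e1]; exact hD
  · have e2 : Sum.inr ⁻¹' (Quot.mk (AdjRel f) ⁻¹' (Quot.mk (AdjRel f) '' C)) =
        (Sum.inr ⁻¹' C) ∪ Subtype.val '' (f ⁻¹' D) := Set.ext key2
    rw [e2]
    exact (hC.preimage continuous_inr).union
      (hA.isClosedEmbedding_subtypeVal.isClosedMap _ (hD.preimage hf.continuous))

lemma adjFiber_compact (hf : IsProperMap f) (z : AdjSpace f) :
    IsCompact (Quot.mk (AdjRel f) ⁻¹' {z}) := by
  induction z using Quot.ind with
  | _ c =>
  have main : ∀ x : X, IsCompact (Quot.mk (AdjRel f) ⁻¹' {Quot.mk (AdjRel f) (Sum.inl x)}) := by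
    intro x
    have e : Quot.mk (AdjRel f) ⁻¹' {Quot.mk (AdjRel f) (Sum.inl x)} =
        Sum.inl '' {x} ∪ Sum.inr '' (Subtype.val '' (f ⁻¹' {x})) := by
      ext w
      simp only [Set.mem_preimage, Set.mem_singleton_iff, adj_mk_eq_mk]
      rcases w with x' | y
      · constructor
        · intro hw
          simp only [adjNorm, Sum.inl.injEq] at hw
          exact Or.inl ⟨x, rfl, hw.symm ▸ rfl⟩
        · rintro (⟨x'', hx'', hE⟩ | ⟨y, hy, hE⟩)
          · cases hE; simp only [Set.mem_singleton_iff] at hx''; cases hx''; rfl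
          · exact absurd hE (by simp)
      · by_cases h : y ∈ A
        · constructor
          · intro hw
            simp only [adjNorm, dif_pos h, Sum.inl.injEq] at hw
            exact Or.inr ⟨y, ⟨⟨y, h⟩, hw, rfl⟩, rfl⟩
          · rintro (⟨x'', _, hE⟩ | ⟨y', ⟨a, ha, ha1⟩, hE⟩)
            · exact absurd hE (by simp)
            · cases hE
              have : a = ⟨y, h⟩ := Subtype.ext ha1
              simp only [adjNorm, dif_pos h]
              rw [← this]; exact congrArg Sum.inl ha
        · constructor
          · intro hw
            simp [adjNorm, dif_neg h] at hw
          · rintro (⟨x'', _, hE⟩ | ⟨y', ⟨a, _, ha1⟩, hE⟩)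
            · exact absurd hE (by simp)
            · cases hE; exact absurd (ha1 ▸ a.2) h
    rw [e]
    exact ((isCompact_singleton.image continuous_inl)).union
      ((((hf.isCompact_preimage isCompact_singleton).image
        continuous_subtype_val)).image continuous_inr)
  rcases c with x | y
  · exact main x
  · by_cases h : y ∈ A
    · have hglue : Quot.mk (AdjRel f) (Sum.inr y) = Quot.mk (AdjRel f) (Sum.inl (f ⟨y, h⟩)) :=
        (Quot.sound (AdjRel.glue (f := f) ⟨y, h⟩)).symm
      rw [hglue]; exact main _
    · have e : Quot.mk (AdjRel f) ⁻¹' {Quot.mk (AdjRel f) (Sum.inr y)} = {Sum.inr y} := by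
        ext w
        simp only [Set.mem_preimage, Set.mem_singleton_iff, adj_mk_eq_mk]
        rcases w with x' | y'
        · constructor
          · intro hw; simp [adjNorm, dif_neg h] at hw
          · intro hw; exact absurd hw (by simp)
        · by_cases h' : y' ∈ A
          · constructor
            · intro hw; simp [adjNorm, dif_pos h', dif_neg h] at hw
            · intro hw
              cases hw; exact absurd h' h
          · constructor
            · intro hw
              simp only [adjNorm, dif_neg h', dif_neg h, Sum.inr.injEq] at hw
              exact congrArg Sum.inr hw
            · intro hw; cases hw; simp [adjNorm, dif_neg h]
      convert (isCompact_singleton (x := (Sum.inr y : X ⊕ Y))) using 1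
      exact e

lemma isProperMap_adjMk (hA : IsClosed A) (hf : IsProperMap f) :
    IsProperMap (Quot.mk (AdjRel f)) :=
  isProperMap_iff_isClosedMap_and_compact_fibers.2
    ⟨continuous_quot_mk, isClosedMap_adjMk f hA hf, fun z => adjFiber_compact f hf z⟩

lemma isClosedEmbedding_adjInc (hA : IsClosed A) (hf : IsProperMap f) :
    IsClosedEmbedding (adjInc f) := by
  refine IsClosedEmbedding.of_continuous_injective_isClosedMap
    (continuous_quot_mk.comp continuous_inl) (adjInc_injective f) ?_
  intro C hC
  have : adjInc f '' C = Quot.mk (AdjRel f) '' (Sum.inl '' C) := by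
    rw [Set.image_image]; rfl
  rw [this]
  exact isClosedMap_adjMk f hA hf _ (Topology.IsClosedEmbedding.inl.isClosedMap _ hC)

lemma properCont_adjP (hA : IsClosed A) (hf : IsProperMap f) : ProperCont (adjP f) := by
  refine ⟨continuous_quot_mk.comp continuous_inr, fun K hK => ?_⟩
  have h1 : IsCompact (Quot.mk (AdjRel f) ⁻¹' K) :=
    (isProperMap_adjMk f hA hf).isCompact_preimage hK
  exact Topology.IsClosedEmbedding.inr.isProperMap.isCompact_preimage h1

end AdjAux

/-- Let `E ∪_m F` be an adjunction topological graph. Then `E` is a closed subgraph of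
`E ∪_m F` (via the canonical closed embeddings of `E⁰` and `E¹`), and the canonical maps
`p⁰ : F⁰ → (E ∪_m F)⁰`, `p¹ : F¹ → (E ∪_m F)¹` are proper and satisfy (F1). -/
theorem adjGraph_closedSubgraph_and_p_proper
    {VE EE VF EF : Type*} [TopologicalSpace VE] [TopologicalSpace EE]
    [TopologicalSpace VF] [TopologicalSpace EF]
    [LocallyCompactSpace VE] [T2Space VE] [LocallyCompactSpace EE] [T2Space EE]
    [LocallyCompactSpace VF] [T2Space VF] [LocallyCompactSpace EF] [T2Space EF]
    (gE : GraphData VE EE) (gF : GraphData VF EF)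
    (hE : IsTopGraph gE) (hF : IsTopGraph gF)
    {G0 : Set VF} {G1 : Set EF} (hG : IsClosedSubgraph gF G0 G1)
    (hpre : gF.r ⁻¹' G0 ⊆ G1)
    (m0 : G0 → VE) (m1 : G1 → EE) (hm0 : ProperCont m0) (hm1 : ProperCont m1)
    (hF1s : ∀ e : G1, gE.s (m1 e) = m0 ⟨gF.s e, hG.s_maps e.2⟩)
    (hF1r : ∀ e : G1, gE.r (m1 e) = m0 ⟨gF.r e, hG.r_maps e.2⟩) :
    IsClosedEmbedding (adjInc m0) ∧ IsClosedEmbedding (adjInc m1) ∧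
    IsClosedSubgraph (adjGraph gE gF m0 m1 hG.s_maps hG.r_maps hF1s hF1r)
      (Set.range (adjInc m0)) (Set.range (adjInc m1)) ∧
    (∀ e : EE,
      (adjGraph gE gF m0 m1 hG.s_maps hG.r_maps hF1s hF1r).s (adjInc m1 e)
          = adjInc m0 (gE.s e) ∧
      (adjGraph gE gF m0 m1 hG.s_maps hG.r_maps hF1s hF1r).r (adjInc m1 e)
          = adjInc m0 (gE.r e)) ∧
    ProperCont (adjP m0) ∧ ProperCont (adjP m1) ∧
    (∀ e : EF,
      (adjGraph gE gF m0 m1 hG.s_maps hG.r_maps hF1s hF1r).s (adjP m1 e)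
          = adjP m0 (gF.s e) ∧
      (adjGraph gE gF m0 m1 hG.s_maps hG.r_maps hF1s hF1r).r (adjP m1 e)
          = adjP m0 (gF.r e)) := by
  
  classical
  -- proper maps
  have hpm0 : IsProperMap m0 := isProperMap_iff_isCompact_preimage.2
    ⟨hm0.1, fun K hK => hm0.2 K hK⟩
  have hpm1 : IsProperMap m1 := isProperMap_iff_isCompact_preimage.2
    ⟨hm1.1, fun K hK => hm1.2 K hK⟩
  have emb0 : IsClosedEmbedding (adjInc m0) := isClosedEmbedding_adjInc m0 hG.closed0 hpm0
  have emb1 : IsClosedEmbedding (adjInc m1) := isClosedEmbedding_adjInc m1 hG.closed1 hpm1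
  set g := adjGraph gE gF m0 m1 hG.s_maps hG.r_maps hF1s hF1r with hg
  have key_s : ∀ e : EE, g.s (adjInc m1 e) = adjInc m0 (gE.s e) := fun _ => rfl
  have key_r : ∀ e : EE, g.r (adjInc m1 e) = adjInc m0 (gE.r e) := fun _ => rfl
  have key_sF : ∀ e : EF, g.s (adjP m1 e) = adjP m0 (gF.s e) := fun _ => rfl
  have key_rF : ∀ e : EF, g.r (adjP m1 e) = adjP m0 (gF.r e) := fun _ => rfl
  -- continuity of the structure maps
  have hsc : Continuous g.s := by
    refine continuous_quot_lift _ ?_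
    have : (fun x : EE ⊕ EF => match x with
        | Sum.inl e => adjInc m0 (gE.s e)
        | Sum.inr e => adjP m0 (gF.s e)) =
        Sum.elim (fun e => adjInc m0 (gE.s e)) (fun e => adjP m0 (gF.s e)) := by
      funext x; rcases x with e | e <;> rfl
    rw [this]
    exact Continuous.sumElim (emb0.continuous.comp hE.s_cont)
      ((continuous_quot_mk.comp continuous_inr).comp hF.s_cont)
  have hrc : Continuous g.r := by
    refine continuous_quot_lift _ ?_
    have : (fun x : EE ⊕ EF => match x with
        | Sum.inl e => adjInc m0 (gE.r e)
        | Sum.inr e => adjP m0 (gF.r e)) =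
        Sum.elim (fun e => adjInc m0 (gE.r e)) (fun e => adjP m0 (gF.r e)) := by
      funext x; rcases x with e | e <;> rfl
    rw [this]
    exact Continuous.sumElim (emb0.continuous.comp hE.r_cont)
      ((continuous_quot_mk.comp continuous_inr).comp hF.r_cont)
  -- homeomorphisms onto the ranges
  let h0 : VE ≃ₜ Set.range (adjInc m0) := emb0.toIsEmbedding.toHomeomorph
  let h1 : EE ≃ₜ Set.range (adjInc m1) := emb1.toIsEmbedding.toHomeomorph
  have hval0 : ∀ x, (h0 x : AdjSpace m0) = adjInc m0 x := fun _ => rfl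
  have hval1 : ∀ x, (h1 x : AdjSpace m1) = adjInc m1 x := fun _ => rfl
  have hs_maps : Set.MapsTo g.s (Set.range (adjInc m1)) (Set.range (adjInc m0)) := by
    rintro _ ⟨e, rfl⟩; exact ⟨gE.s e, (key_s e).symm⟩
  have hr_maps : Set.MapsTo g.r (Set.range (adjInc m1)) (Set.range (adjInc m0)) := by
    rintro _ ⟨e, rfl⟩; exact ⟨gE.r e, (key_r e).symm⟩
  have hr_eq : (g.restrict (Set.range (adjInc m0)) (Set.range (adjInc m1))
      hs_maps hr_maps).r = (⇑h0 ∘ gE.r ∘ ⇑h1.symm) := by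
    funext e
    obtain ⟨x, hx⟩ := e.2
    have hex : h1 x = e := Subtype.ext (by rw [hval1]; exact hx)
    have hsx : h1.symm e = x := by rw [← hex, Homeomorph.symm_apply_apply]
    apply Subtype.ext
    show g.r e.1 = (h0 (gE.r (h1.symm e)) : AdjSpace m0)
    rw [hsx, hval0, ← hx]
    exact key_r x
  refine ⟨emb0, emb1, ⟨hs_maps, hr_maps, emb0.isClosed_range, emb1.isClosed_range, ?_⟩,
    fun e => ⟨key_s e, key_r e⟩,
    properCont_adjP m0 hG.closed0 hpm0, properCont_adjP m1 hG.closed1 hpm1,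
    fun e => ⟨key_sF e, key_rF e⟩⟩
  refine ⟨?_, ?_, ?_⟩
  · exact (hsc.comp continuous_subtype_val).subtype_mk _
  · exact (hrc.comp continuous_subtype_val).subtype_mk _
  · rw [hr_eq]
    exact (h0.isLocalHomeomorph.comp hE.r_locHomeo).comp h1.symm.isLocalHomeomorph
end
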